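/- Entropy-bound inversion: for all reals a and c with 0 ≤ a ≤ 1, c ≥ 0, and binEntropy a ≥ log 2 − c (natural logarithm), one has a ≤ 1/2 + √(c/2). In particular, with c = (P/N)·log 2 for reals P ≥ 0 and N > 0, the conclusion reads a ≤ 1/2 + √((log 2 / 2) · (P/N)). -/

import Mathlib

open Real

/-- Auxiliary: `2x ≤ log(1+x) - log(1-x)` for `0 ≤ x < 1`. -/
lemma aux_log_ratio {x : ℝ} (hx0 : 0 ≤ x) (hx1 : x < 1) :
    2 * x ≤ Real.log (1 + x) - Real.log (1 - x) := by
  set f : ℝ → ℝ := fun t => Real.log (1 + t) - Real.log (1 - t) - 2 * t with hf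
  have key : MonotoneOn f (Set.Icc 0 x) := by
    apply monotoneOn_of_deriv_nonneg (convex_Icc 0 x)
    · apply ContinuousOn.sub (ContinuousOn.sub _ _) (by fun_prop)
      · apply ContinuousOn.log (by fun_prop)
        intro t ht
        simp only [Set.mem_Icc] at ht
        nlinarith [ht.1]
      · apply ContinuousOn.log (by fun_prop)
        intro t ht
        simp only [Set.mem_Icc] at ht
        nlinarith [ht.2]
    · intro t ht
      rw [interior_Icc] at ht
      obtain ⟨ht0, ht1⟩ := ht
      have h1 : (1:ℝ) + t ≠ 0 := by nlinarith
      have h2 : (1:ℝ) - t ≠ 0 := by nlinarith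
      apply DifferentiableAt.differentiableWithinAt
      apply DifferentiableAt.sub (DifferentiableAt.sub _ _) (by fun_prop)
      · exact ((differentiableAt_id.const_add 1).log h1)
      · exact ((differentiableAt_id.const_sub 1).log h2)
    · intro t ht
      rw [interior_Icc] at ht
      obtain ⟨ht0, ht1⟩ := ht
      have h1 : (0:ℝ) < 1 + t := by nlinarith
      have h2 : (0:ℝ) < 1 - t := by nlinarith
      have d1 : HasDerivAt (fun t : ℝ => Real.log (1 + t)) (1 / (1 + t)) t := by
        simpa using ((hasDerivAt_id t).const_add 1).log h1.ne'
      have d2 : HasDerivAt (fun t : ℝ => Real.log (1 - t)) (-1 / (1 - t)) t := by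
        simpa using ((hasDerivAt_id t).const_sub 1).log h2.ne'
      have d3 : HasDerivAt f (1 / (1 + t) - (-1 / (1 - t)) - 2) t := by
        exact ((d1.sub d2).sub ((hasDerivAt_id t).const_mul 2)).congr_deriv (by ring)
      rw [d3.deriv]
      rw [div_sub_div _ _ h1.ne' h2.ne', sub_nonneg]
      rw [le_div_iff₀ (by positivity)]
      nlinarith
  have h0 : f 0 ≤ f x := key (Set.mem_Icc.2 ⟨le_refl 0, hx0⟩) (Set.mem_Icc.2 ⟨hx0, le_refl x⟩) hx0
  simp only [hf] at h0
  norm_num at h0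
  linarith

/-- Binary Pinsker: `binEntropy p + 2(p - 1/2)² ≤ log 2` on `[1/2, 1]`. -/
lemma aux_pinsker {p : ℝ} (hp : 1/2 ≤ p) (hp1 : p ≤ 1) :
    Real.binEntropy p + 2 * (p - 1/2)^2 ≤ Real.log 2 := by
  set g : ℝ → ℝ := fun t => Real.binEntropy t + 2 * (t - 1/2)^2 with hg
  have key : AntitoneOn g (Set.Icc (1/2 : ℝ) 1) := by
    apply antitoneOn_of_deriv_nonpos (convex_Icc _ _)
    · exact (Real.binEntropy_continuous.continuousOn).add (by fun_prop)
    · intro t ht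
      rw [interior_Icc] at ht
      exact (Real.differentiableAt_binEntropy (by linarith [ht.1]) (ne_of_lt ht.2)).add
        (by fun_prop) |>.differentiableWithinAt
    · intro t ht
      rw [interior_Icc] at ht
      obtain ⟨ht0, ht1⟩ := ht
      have hd : HasDerivAt g ((Real.log (1 - t) - Real.log t) + 2 * (2 * (t - 1/2))) t := by
        have h1 : HasDerivAt Real.binEntropy (Real.log (1 - t) - Real.log t) t := by
          have := Real.hasDerivAt_binEntropy (p := t) (by linarith) (ne_of_lt ht1)
          exact this
        have h2 : HasDerivAt (fun t : ℝ => 2 * (t - 1/2)^2) (2 * (2 * (t - 1/2))) t := by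
          have := (((hasDerivAt_id t).sub_const (1/2)).pow 2).const_mul 2
          simpa using this
        exact h1.add h2
      rw [hd.deriv]
      -- use aux_log_ratio with x = 2t - 1
      have hx0 : (0:ℝ) ≤ 2*t - 1 := by linarith
      have hx1 : 2*t - 1 < 1 := by linarith
      have := aux_log_ratio hx0 hx1
      have e1 : (1:ℝ) + (2*t-1) = 2*t := by ring
      have e2 : (1:ℝ) - (2*t-1) = 2*(1-t) := by ring
      rw [e1, e2, Real.log_mul two_ne_zero (by linarith), Real.log_mul two_ne_zero (by linarith)] at this
      linarith
  have h0 : g p ≤ g (1/2) :=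
    key (Set.mem_Icc.2 ⟨le_refl _, by linarith⟩) (Set.mem_Icc.2 ⟨hp, hp1⟩) hp
  simpa [hg, Real.binEntropy_two_inv] using h0

/-- Entropy-bound inversion: if `binEntropy a ≥ log 2 − c` with `0 ≤ a ≤ 1` and `c ≥ 0`,
then `a ≤ 1/2 + √(c/2)`. -/
theorem entropy_bound_inversion (a c : ℝ) (ha0 : 0 ≤ a) (ha1 : a ≤ 1) (hc : 0 ≤ c)
    (h : Real.binEntropy a ≥ Real.log 2 - c) :
    a ≤ 1/2 + Real.sqrt (c / 2) := by
  rcases le_or_gt a (1/2) with hle | hgt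
  · have : (0:ℝ) ≤ Real.sqrt (c/2) := Real.sqrt_nonneg _
    linarith
  · have hp := aux_pinsker hgt.le ha1
    have hsq : (a - 1/2)^2 ≤ c/2 := by linarith
    have : a - 1/2 ≤ Real.sqrt (c/2) :=
      (Real.le_sqrt (by linarith) (by positivity)).2 hsq
    linarith
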